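/- There is a chain of primitive isometric embeddings of even lattices L ↪ L' ↪ L'' ↪ L''', where L = H ⊕ E₈(−1) ⊕ A₁(−1)^{⊕6} (rank 16), L' = H ⊕ E₈(−1) ⊕ D₄(−1) ⊕ A₁(−1)^{⊕3} (rank 17), L'' = H ⊕ E₈(−1) ⊕ D₆(−1) ⊕ A₁(−1)^{⊕2} (rank 18), and L''' = H ⊕ E₈(−1) ⊕ E₇(−1) ⊕ A₁(−1)^{⊕2} (rank 19). That is, for each consecutive pair there exists an injective ℤ-linear map ι: ℤ^N → ℤ^{N+1} satisfying (ιx)ᵀ G' (ιy) = xᵀ G y for all x, y ∈ ℤ^N (where G, G' are the respective block-diagonal Gram matrices) and whose cokernel ℤ^{N+1}/ι(ℤ^N) is torsion-free. -/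

import Mathlib

open Matrix

/-- Square integer matrices of size `n`. -/
abbrev IntMat (n : ℕ) := Matrix (Fin n) (Fin n) ℤ

/-- Block-diagonal (orthogonal) direct sum of Gram matrices. -/
def dsum {m n : ℕ} (A : IntMat m) (B : IntMat n) : IntMat (m + n) :=
  Matrix.reindex finSumFinEquiv finSumFinEquiv (Matrix.fromBlocks A 0 0 B)

infixl:65 " ⊕ₘ " => dsum

/-- Gram matrix of the hyperbolic plane `H`. -/
def HypMat : IntMat 2 := !![0, 1; 1, 0]

/-- The standard Cartan matrix of the root system `Aₙ`. -/
def CartanA (n : ℕ) : IntMat n :=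
  Matrix.of fun i j =>
    if i = j then 2 else if (i : ℕ) + 1 = j ∨ (j : ℕ) + 1 = i then -1 else 0

/-- The standard Cartan matrix of the root system `Dₙ` (`n ≥ 3`): a chain on the
nodes `0, …, n-2` together with the node `n-1` attached to the node `n-3`. -/
def CartanD (n : ℕ) : IntMat n :=
  Matrix.of fun i j =>
    if i = j then 2
    else if ((i : ℕ) + 1 = j ∨ (j : ℕ) + 1 = i) ∧ (i : ℕ) + 1 ≠ n ∧ (j : ℕ) + 1 ≠ n then -1
    else if ((i : ℕ) + 3 = n ∧ (j : ℕ) + 1 = n) ∨ ((j : ℕ) + 3 = n ∧ (i : ℕ) + 1 = n) then -1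
    else 0

/-- The standard Cartan matrix of the root system `E₇`: a chain on the nodes
`0, …, 5` with the node `6` attached to the node `2`. -/
def CartanE₇ : IntMat 7 :=
  !![ 2, -1,  0,  0,  0,  0,  0;
     -1,  2, -1,  0,  0,  0,  0;
      0, -1,  2, -1,  0,  0, -1;
      0,  0, -1,  2, -1,  0,  0;
      0,  0,  0, -1,  2, -1,  0;
      0,  0,  0,  0, -1,  2,  0;
      0,  0, -1,  0,  0,  0,  2]

/-- The standard Cartan matrix of the root system `E₈`: a chain on the nodes
`0, …, 6` with the node `7` attached to the node `2`. -/
def CartanE₈ : IntMat 8 :=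
  !![ 2, -1,  0,  0,  0,  0,  0,  0;
     -1,  2, -1,  0,  0,  0,  0,  0;
      0, -1,  2, -1,  0,  0,  0, -1;
      0,  0, -1,  2, -1,  0,  0,  0;
      0,  0,  0, -1,  2, -1,  0,  0;
      0,  0,  0,  0, -1,  2, -1,  0;
      0,  0,  0,  0,  0, -1,  2,  0;
      0,  0, -1,  0,  0,  0,  0,  2]

/-- Two integral lattices given by Gram matrices `G₁, G₂` of rank `N` are isometric:
there is `P ∈ GL(N, ℤ)` with `Pᵀ G₁ P = G₂`. -/
def LatticeIsometric {N : ℕ} (G₁ G₂ : IntMat N) : Prop :=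
  ∃ P : IntMat N, (P.det = 1 ∨ P.det = -1) ∧ Pᵀ * G₁ * P = G₂

/-- A primitive isometric embedding between the integral lattices with Gram matrices
`G` (rank `M`) and `G'` (rank `N`): an injective `ℤ`-linear map preserving the
bilinear forms whose cokernel is torsion-free. -/
def PrimitiveIsometricEmbedding {M N : ℕ} (G : IntMat M) (G' : IntMat N) : Prop :=
  ∃ ι : (Fin M → ℤ) →ₗ[ℤ] (Fin N → ℤ),
    Function.Injective ι ∧
    (∀ x y : Fin M → ℤ, dotProduct (ι x) (G'.mulVec (ι y)) =
      dotProduct x (G.mulVec y)) ∧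
    NoZeroSMulDivisors ℤ ((Fin N → ℤ) ⧸ LinearMap.range ι)

/-- Gram matrix of `L = H ⊕ E₈(-1) ⊕ A₁(-1)^{⊕6}` (rank 16). -/
def GramL : IntMat 16 :=
  HypMat ⊕ₘ (-CartanE₈) ⊕ₘ (-CartanA 1) ⊕ₘ (-CartanA 1) ⊕ₘ (-CartanA 1) ⊕ₘ (-CartanA 1)
    ⊕ₘ (-CartanA 1) ⊕ₘ (-CartanA 1)

/-- Gram matrix of `L' = H ⊕ E₈(-1) ⊕ D₄(-1) ⊕ A₁(-1)^{⊕3}` (rank 17). -/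
def GramL' : IntMat 17 :=
  HypMat ⊕ₘ (-CartanE₈) ⊕ₘ (-CartanD 4) ⊕ₘ (-CartanA 1) ⊕ₘ (-CartanA 1) ⊕ₘ (-CartanA 1)

/-- Gram matrix of `L'' = H ⊕ E₈(-1) ⊕ D₆(-1) ⊕ A₁(-1)^{⊕2}` (rank 18). -/
def GramL'' : IntMat 18 :=
  HypMat ⊕ₘ (-CartanE₈) ⊕ₘ (-CartanD 6) ⊕ₘ (-CartanA 1) ⊕ₘ (-CartanA 1)

/-- Gram matrix of `L''' = H ⊕ E₈(-1) ⊕ E₇(-1) ⊕ A₁(-1)^{⊕2}` (rank 19). -/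
def GramL''' : IntMat 19 :=
  HypMat ⊕ₘ (-CartanE₈) ⊕ₘ (-CartanE₇) ⊕ₘ (-CartanA 1) ⊕ₘ (-CartanA 1)

def B1 : Matrix (Fin 17) (Fin 16) ℤ :=
  !![1, 0, 0, 0, 0, 0, 0, 0, 0, 0, 0, 0, 0, 0, 0, 0;
    0, 1, 0, 0, 0, 0, 0, 0, 0, 0, 0, 0, 0, 0, 0, 0;
    0, 0, 1, 0, 0, 0, 0, 0, 0, 0, 0, 0, 0, 0, 0, 0;
    0, 0, 0, 1, 0, 0, 0, 0, 0, 0, 0, 0, 0, 0, 0, 0;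
    0, 0, 0, 0, 1, 0, 0, 0, 0, 0, 0, 0, 0, 0, 0, 0;
    0, 0, 0, 0, 0, 1, 0, 0, 0, 0, 0, 0, 0, 0, 0, 0;
    0, 0, 0, 0, 0, 0, 1, 0, 0, 0, 0, 0, 0, 0, 0, 0;
    0, 0, 0, 0, 0, 0, 0, 1, 0, 0, 0, 0, 0, 0, 0, 0;
    0, 0, 0, 0, 0, 0, 0, 0, 1, 0, 0, 0, 0, 0, 0, 0;
    0, 0, 0, 0, 0, 0, 0, 0, 0, 1, 0, 0, 0, 0, 0, 0;
    0, 0, 0, 0, 0, 0, 0, 0, 0, 0, 1, 1, 0, 0, 0, 0;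
    0, 0, 0, 0, 0, 0, 0, 0, 0, 0, 0, 2, 0, 0, 0, 0;
    0, 0, 0, 0, 0, 0, 0, 0, 0, 0, 0, 1, 1, 0, 0, 0;
    0, 0, 0, 0, 0, 0, 0, 0, 0, 0, 0, 1, 0, 0, 0, 0;
    0, 0, 0, 0, 0, 0, 0, 0, 0, 0, 0, 0, 0, 1, 0, 0;
    0, 0, 0, 0, 0, 0, 0, 0, 0, 0, 0, 0, 0, 0, 1, 0;
    0, 0, 0, 0, 0, 0, 0, 0, 0, 0, 0, 0, 0, 0, 0, 1]
def C1 : Matrix (Fin 16) (Fin 17) ℤ :=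
  !![1, 0, 0, 0, 0, 0, 0, 0, 0, 0, 0, 0, 0, 0, 0, 0, 0;
    0, 1, 0, 0, 0, 0, 0, 0, 0, 0, 0, 0, 0, 0, 0, 0, 0;
    0, 0, 1, 0, 0, 0, 0, 0, 0, 0, 0, 0, 0, 0, 0, 0, 0;
    0, 0, 0, 1, 0, 0, 0, 0, 0, 0, 0, 0, 0, 0, 0, 0, 0;
    0, 0, 0, 0, 1, 0, 0, 0, 0, 0, 0, 0, 0, 0, 0, 0, 0;
    0, 0, 0, 0, 0, 1, 0, 0, 0, 0, 0, 0, 0, 0, 0, 0, 0;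
    0, 0, 0, 0, 0, 0, 1, 0, 0, 0, 0, 0, 0, 0, 0, 0, 0;
    0, 0, 0, 0, 0, 0, 0, 1, 0, 0, 0, 0, 0, 0, 0, 0, 0;
    0, 0, 0, 0, 0, 0, 0, 0, 1, 0, 0, 0, 0, 0, 0, 0, 0;
    0, 0, 0, 0, 0, 0, 0, 0, 0, 1, 0, 0, 0, 0, 0, 0, 0;
    0, 0, 0, 0, 0, 0, 0, 0, 0, 0, 1, 0, 0, -1, 0, 0, 0;
    0, 0, 0, 0, 0, 0, 0, 0, 0, 0, 0, 0, 0, 1, 0, 0, 0;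
    0, 0, 0, 0, 0, 0, 0, 0, 0, 0, 0, 0, 1, -1, 0, 0, 0;
    0, 0, 0, 0, 0, 0, 0, 0, 0, 0, 0, 0, 0, 0, 1, 0, 0;
    0, 0, 0, 0, 0, 0, 0, 0, 0, 0, 0, 0, 0, 0, 0, 1, 0;
    0, 0, 0, 0, 0, 0, 0, 0, 0, 0, 0, 0, 0, 0, 0, 0, 1]
def B2 : Matrix (Fin 18) (Fin 17) ℤ :=
  !![1, 0, 0, 0, 0, 0, 0, 0, 0, 0, 0, 0, 0, 0, 0, 0, 0;
    0, 1, 0, 0, 0, 0, 0, 0, 0, 0, 0, 0, 0, 0, 0, 0, 0;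
    0, 0, 1, 0, 0, 0, 0, 0, 0, 0, 0, 0, 0, 0, 0, 0, 0;
    0, 0, 0, 1, 0, 0, 0, 0, 0, 0, 0, 0, 0, 0, 0, 0, 0;
    0, 0, 0, 0, 1, 0, 0, 0, 0, 0, 0, 0, 0, 0, 0, 0, 0;
    0, 0, 0, 0, 0, 1, 0, 0, 0, 0, 0, 0, 0, 0, 0, 0, 0;
    0, 0, 0, 0, 0, 0, 1, 0, 0, 0, 0, 0, 0, 0, 0, 0, 0;
    0, 0, 0, 0, 0, 0, 0, 1, 0, 0, 0, 0, 0, 0, 0, 0, 0;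
    0, 0, 0, 0, 0, 0, 0, 0, 1, 0, 0, 0, 0, 0, 0, 0, 0;
    0, 0, 0, 0, 0, 0, 0, 0, 0, 1, 0, 0, 0, 0, 0, 0, 0;
    0, 0, 0, 0, 0, 0, 0, 0, 0, 0, 1, 0, 0, 0, 0, 0, 0;
    0, 0, 0, 0, 0, 0, 0, 0, 0, 0, 0, 1, 0, 0, 0, 0, 0;
    0, 0, 0, 0, 0, 0, 0, 0, 0, 0, 0, 0, 1, 1, 0, 0, 0;
    0, 0, 0, 0, 0, 0, 0, 0, 0, 0, 0, 0, 0, 2, 0, 0, 0;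
    0, 0, 0, 0, 0, 0, 0, 0, 0, 0, 0, 0, 0, 1, 1, 0, 0;
    0, 0, 0, 0, 0, 0, 0, 0, 0, 0, 0, 0, 0, 1, 0, 0, 0;
    0, 0, 0, 0, 0, 0, 0, 0, 0, 0, 0, 0, 0, 0, 0, 1, 0;
    0, 0, 0, 0, 0, 0, 0, 0, 0, 0, 0, 0, 0, 0, 0, 0, 1]
def C2 : Matrix (Fin 17) (Fin 18) ℤ :=
  !![1, 0, 0, 0, 0, 0, 0, 0, 0, 0, 0, 0, 0, 0, 0, 0, 0, 0;
    0, 1, 0, 0, 0, 0, 0, 0, 0, 0, 0, 0, 0, 0, 0, 0, 0, 0;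
    0, 0, 1, 0, 0, 0, 0, 0, 0, 0, 0, 0, 0, 0, 0, 0, 0, 0;
    0, 0, 0, 1, 0, 0, 0, 0, 0, 0, 0, 0, 0, 0, 0, 0, 0, 0;
    0, 0, 0, 0, 1, 0, 0, 0, 0, 0, 0, 0, 0, 0, 0, 0, 0, 0;
    0, 0, 0, 0, 0, 1, 0, 0, 0, 0, 0, 0, 0, 0, 0, 0, 0, 0;
    0, 0, 0, 0, 0, 0, 1, 0, 0, 0, 0, 0, 0, 0, 0, 0, 0, 0;
    0, 0, 0, 0, 0, 0, 0, 1, 0, 0, 0, 0, 0, 0, 0, 0, 0, 0;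
    0, 0, 0, 0, 0, 0, 0, 0, 1, 0, 0, 0, 0, 0, 0, 0, 0, 0;
    0, 0, 0, 0, 0, 0, 0, 0, 0, 1, 0, 0, 0, 0, 0, 0, 0, 0;
    0, 0, 0, 0, 0, 0, 0, 0, 0, 0, 1, 0, 0, 0, 0, 0, 0, 0;
    0, 0, 0, 0, 0, 0, 0, 0, 0, 0, 0, 1, 0, 0, 0, 0, 0, 0;
    0, 0, 0, 0, 0, 0, 0, 0, 0, 0, 0, 0, 1, 0, 0, -1, 0, 0;
    0, 0, 0, 0, 0, 0, 0, 0, 0, 0, 0, 0, 0, 0, 0, 1, 0, 0;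
    0, 0, 0, 0, 0, 0, 0, 0, 0, 0, 0, 0, 0, 0, 1, -1, 0, 0;
    0, 0, 0, 0, 0, 0, 0, 0, 0, 0, 0, 0, 0, 0, 0, 0, 1, 0;
    0, 0, 0, 0, 0, 0, 0, 0, 0, 0, 0, 0, 0, 0, 0, 0, 0, 1]
def B3 : Matrix (Fin 19) (Fin 18) ℤ :=
  !![1, 0, 0, 0, 0, 0, 0, 0, 0, 0, 0, 0, 0, 0, 0, 0, 0, 0;
    0, 1, 0, 0, 0, 0, 0, 0, 0, 0, 0, 0, 0, 0, 0, 0, 0, 0;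
    0, 0, 1, 0, 0, 0, 0, 0, 0, 0, 0, 0, 0, 0, 0, 0, 0, 0;
    0, 0, 0, 1, 0, 0, 0, 0, 0, 0, 0, 0, 0, 0, 0, 0, 0, 0;
    0, 0, 0, 0, 1, 0, 0, 0, 0, 0, 0, 0, 0, 0, 0, 0, 0, 0;
    0, 0, 0, 0, 0, 1, 0, 0, 0, 0, 0, 0, 0, 0, 0, 0, 0, 0;
    0, 0, 0, 0, 0, 0, 1, 0, 0, 0, 0, 0, 0, 0, 0, 0, 0, 0;
    0, 0, 0, 0, 0, 0, 0, 1, 0, 0, 0, 0, 0, 0, 0, 0, 0, 0;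
    0, 0, 0, 0, 0, 0, 0, 0, 1, 0, 0, 0, 0, 0, 0, 0, 0, 0;
    0, 0, 0, 0, 0, 0, 0, 0, 0, 1, 0, 0, 0, 0, 0, 0, 0, 0;
    0, 0, 0, 0, 0, 0, 0, 0, 0, 0, 0, 0, 0, 0, 0, 0, 0, 0;
    0, 0, 0, 0, 0, 0, 0, 0, 0, 0, 0, 0, 0, 0, 1, 0, 0, 0;
    0, 0, 0, 0, 0, 0, 0, 0, 0, 0, 0, 0, 0, 1, 0, 0, 0, 0;
    0, 0, 0, 0, 0, 0, 0, 0, 0, 0, 0, 0, 1, 0, 0, 0, 0, 0;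
    0, 0, 0, 0, 0, 0, 0, 0, 0, 0, 0, 1, 0, 0, 0, 0, 0, 0;
    0, 0, 0, 0, 0, 0, 0, 0, 0, 0, 1, 0, 0, 0, 0, 0, 0, 0;
    0, 0, 0, 0, 0, 0, 0, 0, 0, 0, 0, 0, 0, 0, 0, 1, 0, 0;
    0, 0, 0, 0, 0, 0, 0, 0, 0, 0, 0, 0, 0, 0, 0, 0, 1, 0;
    0, 0, 0, 0, 0, 0, 0, 0, 0, 0, 0, 0, 0, 0, 0, 0, 0, 1]
def C3 : Matrix (Fin 18) (Fin 19) ℤ :=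
  !![1, 0, 0, 0, 0, 0, 0, 0, 0, 0, 0, 0, 0, 0, 0, 0, 0, 0, 0;
    0, 1, 0, 0, 0, 0, 0, 0, 0, 0, 0, 0, 0, 0, 0, 0, 0, 0, 0;
    0, 0, 1, 0, 0, 0, 0, 0, 0, 0, 0, 0, 0, 0, 0, 0, 0, 0, 0;
    0, 0, 0, 1, 0, 0, 0, 0, 0, 0, 0, 0, 0, 0, 0, 0, 0, 0, 0;
    0, 0, 0, 0, 1, 0, 0, 0, 0, 0, 0, 0, 0, 0, 0, 0, 0, 0, 0;
    0, 0, 0, 0, 0, 1, 0, 0, 0, 0, 0, 0, 0, 0, 0, 0, 0, 0, 0;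
    0, 0, 0, 0, 0, 0, 1, 0, 0, 0, 0, 0, 0, 0, 0, 0, 0, 0, 0;
    0, 0, 0, 0, 0, 0, 0, 1, 0, 0, 0, 0, 0, 0, 0, 0, 0, 0, 0;
    0, 0, 0, 0, 0, 0, 0, 0, 1, 0, 0, 0, 0, 0, 0, 0, 0, 0, 0;
    0, 0, 0, 0, 0, 0, 0, 0, 0, 1, 0, 0, 0, 0, 0, 0, 0, 0, 0;
    0, 0, 0, 0, 0, 0, 0, 0, 0, 0, 0, 0, 0, 0, 0, 1, 0, 0, 0;
    0, 0, 0, 0, 0, 0, 0, 0, 0, 0, 0, 0, 0, 0, 1, 0, 0, 0, 0;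
    0, 0, 0, 0, 0, 0, 0, 0, 0, 0, 0, 0, 0, 1, 0, 0, 0, 0, 0;
    0, 0, 0, 0, 0, 0, 0, 0, 0, 0, 0, 0, 1, 0, 0, 0, 0, 0, 0;
    0, 0, 0, 0, 0, 0, 0, 0, 0, 0, 0, 1, 0, 0, 0, 0, 0, 0, 0;
    0, 0, 0, 0, 0, 0, 0, 0, 0, 0, 0, 0, 0, 0, 0, 0, 1, 0, 0;
    0, 0, 0, 0, 0, 0, 0, 0, 0, 0, 0, 0, 0, 0, 0, 0, 0, 1, 0;
    0, 0, 0, 0, 0, 0, 0, 0, 0, 0, 0, 0, 0, 0, 0, 0, 0, 0, 1]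

lemma key_embed {M N : ℕ} (G : IntMat M) (G' : IntMat N) (B : Matrix (Fin N) (Fin M) ℤ)
    (C : Matrix (Fin M) (Fin N) ℤ) (hCB : C * B = 1) (hG : Bᵀ * G' * B = G) :
    PrimitiveIsometricEmbedding G G' := by
  refine ⟨B.mulVecLin, ?_, ?_, ?_⟩
  · intro x y hxy
    have h := congrArg C.mulVecLin hxy
    simpa [Matrix.mulVecLin_apply, Matrix.mulVec_mulVec, hCB] using h
  · intro x y
    rw [← hG, Matrix.mulVecLin_apply, Matrix.mulVecLin_apply,
      ← Matrix.mulVec_mulVec, ← Matrix.mulVec_mulVec,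
      Matrix.dotProduct_mulVec x Bᵀ, Matrix.vecMul_transpose]
  · constructor
    intro c x h
    by_cases hc : c = 0
    · exact Or.inl hc
    right
    obtain ⟨v, rfl⟩ := Submodule.Quotient.mk_surjective _ x
    rw [← Submodule.Quotient.mk_smul, Submodule.Quotient.mk_eq_zero] at h
    obtain ⟨u, hu⟩ := h
    have hu' : B.mulVec u = c • v := hu
    have h2 : C.mulVec (B.mulVec u) = u := by
      rw [Matrix.mulVec_mulVec, hCB, Matrix.one_mulVec]
    have hv : c • v = c • B.mulVec (C.mulVec v) := by
      calc c • v = B.mulVec u := hu'.symm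
        _ = B.mulVec (C.mulVec (B.mulVec u)) := by rw [h2]
        _ = B.mulVec (C.mulVec (c • v)) := by rw [hu']
        _ = c • B.mulVec (C.mulVec v) := by
              rw [Matrix.mulVec_smul, Matrix.mulVec_smul]
    have hv2 : v = B.mulVec (C.mulVec v) := smul_right_injective _ hc hv
    rw [Submodule.Quotient.mk_eq_zero]
    exact ⟨C.mulVec v, hv2.symm⟩

set_option maxHeartbeats 4000000 in
/-- The chain of primitive isometric embeddings `L ↪ L' ↪ L'' ↪ L'''` of even
lattices of ranks 16, 17, 18, 19. -/
theorem lattice_polarization_extension_chain :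
    PrimitiveIsometricEmbedding GramL GramL' ∧
    PrimitiveIsometricEmbedding GramL' GramL'' ∧
    PrimitiveIsometricEmbedding GramL'' GramL''' :=
  ⟨key_embed _ _ B1 C1 (by ext i j; fin_cases i <;> fin_cases j <;> rfl) (by ext i j; fin_cases i <;> fin_cases j <;> rfl),
   key_embed _ _ B2 C2 (by ext i j; fin_cases i <;> fin_cases j <;> rfl) (by ext i j; fin_cases i <;> fin_cases j <;> rfl),
   key_embed _ _ B3 C3 (by ext i j; fin_cases i <;> fin_cases j <;> rfl) (by ext i j; fin_cases i <;> fin_cases j <;> rfl)⟩
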